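/- Every caterpillar tree T on n vertices admits a planar linear arrangement of cost exactly C(n,2); hence D_max^pl(T) = C(n,2), and caterpillars attain the maximum of D_max^pl over all n-vertex trees. -/

import Mathlib

open SimpleGraph

attribute [local instance] Classical.propDecidable

/-- Length of an edge (as an unordered pair) in an arrangement. -/
noncomputable def edgeLen {V : Type*} [Fintype V] (π : V ≃ Fin (Fintype.card V)) :
    Sym2 V → ℕ :=
  Sym2.lift ⟨fun u v => ((π u : ℤ) - (π v : ℤ)).natAbs, fun u v => by
    simp only []; omega⟩

/-- Cost of a linear arrangement: sum of edge lengths. -/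
noncomputable def cost {V : Type*} [Fintype V] (G : SimpleGraph V)
    (π : V ≃ Fin (Fintype.card V)) : ℕ :=
  ∑ᶠ e ∈ G.edgeSet, edgeLen π e

/-- An arrangement is planar if no two edges cross. -/
def Planar {V : Type*} [Fintype V] (G : SimpleGraph V)
    (π : V ≃ Fin (Fintype.card V)) : Prop :=
  ∀ ⦃s t u v : V⦄, G.Adj s t → G.Adj u v → π s < π t → π u < π v → π s < π u →
    ¬(π u < π t ∧ π t < π v)

/-- An arrangement of a tree rooted at `r` is projective if it is planar and no
edge covers the root. -/
def Projective {V : Type*} [Fintype V] (G : SimpleGraph V) (r : V)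
    (π : V ≃ Fin (Fintype.card V)) : Prop :=
  Planar G π ∧ ∀ ⦃u v : V⦄, G.Adj u v → ¬(π u < π r ∧ π r < π v)

noncomputable def maxCost {V : Type*} [Fintype V] (G : SimpleGraph V) : ℕ :=
  sSup {c | ∃ π : V ≃ Fin (Fintype.card V), cost G π = c}

noncomputable def maxPlanar {V : Type*} [Fintype V] (G : SimpleGraph V) : ℕ :=
  sSup {c | ∃ π : V ≃ Fin (Fintype.card V), Planar G π ∧ cost G π = c}

noncomputable def maxProj {V : Type*} [Fintype V] (G : SimpleGraph V) (r : V) : ℕ :=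
  sSup {c | ∃ π : V ≃ Fin (Fintype.card V), Projective G r π ∧ cost G π = c}

/-- `compSize G u v` : the number of vertices of the connected component of `v`
after removing the edge `uv` (this is `n_u(v)`). -/
noncomputable def compSize {V : Type*} [Fintype V] (G : SimpleGraph V) (u v : V) : ℕ :=
  Nat.card {y : V // (G.deleteEdges {s(u, v)}).Reachable v y}

/-- The star graph: the vertex with value `0` (the hub) is adjacent to all others. -/
def starGraph (n : ℕ) : SimpleGraph (Fin n) :=
  SimpleGraph.fromRel (fun i _ => (i : ℕ) = 0)

/-- interval counting lemma, strengthened form -/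
lemma lemmaA (t : ℕ) (ht : 2 ≤ t) (E : Finset (ℕ × ℕ)) :
    ∀ (l r : ℕ),
      (∀ p ∈ E, l ≤ p.1 ∧ p.1 + t ≤ p.2 ∧ p.2 ≤ r) →
      (∀ p ∈ E, ∀ q ∈ E, ¬ (p.1 < q.1 ∧ q.1 < p.2 ∧ p.2 < q.2)) →
      E = ∅ ∨ (E.card + t + l ≤ r + 1 ∧ ((l, r) ∉ E → E.card + t + l ≤ r)) := by
  induction E using Finset.strongInduction with
  | _ E IH =>
  intro l r hbound hnc
  rcases E.eq_empty_or_nonempty with rfl | hne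
  · exact Or.inl rfl
  right
  obtain ⟨e0, he0, hmax⟩ := E.exists_max_image (fun p => p.2 - p.1) hne
  obtain ⟨a, b⟩ := e0
  have hab : l ≤ a ∧ a + t ≤ b ∧ b ≤ r := hbound _ he0
  have hclass : ∀ p ∈ E, p ≠ (a, b) → p.2 ≤ a ∨ (a ≤ p.1 ∧ p.2 ≤ b) ∨ b ≤ p.1 := by
    intro p hp hne'
    have h1 := hnc _ he0 _ hp
    have h2 := hnc _ hp _ he0
    have h3 := hmax _ hp
    have h4 := hbound _ hp
    have h5 : p.1 ≠ a ∨ p.2 ≠ b := by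
      by_contra h
      push_neg at h
      exact hne' (Prod.ext h.1 h.2)
    simp only at h1 h2 h3 h4
    omega
  set EL := E.filter (fun p => p.2 ≤ a) with hEL
  set ER := E.filter (fun p => b ≤ p.1) with hER
  set EI := (E.erase (a, b)).filter (fun p => a ≤ p.1 ∧ p.2 ≤ b) with hEI
  have hsub : E ⊆ insert (a, b) (EL ∪ EI ∪ ER) := by
    intro p hp
    rcases eq_or_ne p (a, b) with rfl | hne'
    · exact Finset.mem_insert_self _ _
    rcases hclass p hp hne' with h | h | h
    · exact Finset.mem_insert_of_mem (Finset.mem_union_left _ (Finset.mem_union_left _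
        (Finset.mem_filter.2 ⟨hp, h⟩)))
    · exact Finset.mem_insert_of_mem (Finset.mem_union_left _ (Finset.mem_union_right _
        (Finset.mem_filter.2 ⟨Finset.mem_erase.2 ⟨hne', hp⟩, h⟩)))
    · exact Finset.mem_insert_of_mem (Finset.mem_union_right _ (Finset.mem_filter.2 ⟨hp, h⟩))
  have hcard : E.card ≤ 1 + (EL.card + EI.card + ER.card) := by
    have h1 := Finset.card_le_card hsub
    have h2 := Finset.card_insert_le (a, b) (EL ∪ EI ∪ ER)
    have h3 := Finset.card_union_le (EL ∪ EI) ER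
    have h4 := Finset.card_union_le EL EI
    omega
  have hELs : EL ⊂ E := by
    refine Finset.ssubset_iff_of_subset (Finset.filter_subset _ _) |>.2 ⟨(a,b), he0, ?_⟩
    simp only [hEL, Finset.mem_filter]
    omega
  have hERs : ER ⊂ E := by
    refine Finset.ssubset_iff_of_subset (Finset.filter_subset _ _) |>.2 ⟨(a,b), he0, ?_⟩
    simp only [hER, Finset.mem_filter]
    omega
  have hEIs : EI ⊂ E := by
    refine Finset.ssubset_iff_of_subset ?_ |>.2 ⟨(a,b), he0, ?_⟩
    · exact (Finset.filter_subset _ _).trans (Finset.erase_subset _ _)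
    · simp only [hEI, Finset.mem_filter, Finset.mem_erase]
      tauto
  have hIHL := IH EL hELs l a (fun p hp => by
      have h1 := hbound p (Finset.mem_of_mem_filter _ hp)
      have h2 := (Finset.mem_filter.1 hp).2
      omega)
    (fun p hp q hq => hnc p (Finset.mem_of_mem_filter _ hp) q (Finset.mem_of_mem_filter _ hq))
  have hIHR := IH ER hERs b r (fun p hp => by
      have h1 := hbound p (Finset.mem_of_mem_filter _ hp)
      have h2 := (Finset.mem_filter.1 hp).2
      omega)
    (fun p hp q hq => hnc p (Finset.mem_of_mem_filter _ hp) q (Finset.mem_of_mem_filter _ hq))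
  have hmemI : ∀ p ∈ EI, p ∈ E := fun p hp =>
    Finset.mem_of_mem_erase (Finset.mem_of_mem_filter _ hp)
  have hIHI := IH EI hEIs a b (fun p hp => by
      have h1 := hbound p (hmemI p hp)
      have h2 := (Finset.mem_filter.1 hp).2
      omega)
    (fun p hp q hq => hnc p (hmemI p hp) q (hmemI q hq))
  -- extract linear facts
  have hLf : EL.card = 0 ∨ EL.card + t + l ≤ a + 1 := by
    rcases hIHL with h | h
    · left; simp [h]
    · right; exact h.1
  have hRf : ER.card = 0 ∨ ER.card + t + b ≤ r + 1 := by
    rcases hIHR with h | h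
    · left; simp [h]
    · right; exact h.1
  have habI : (a, b) ∉ EI := by
    simp only [hEI, Finset.mem_filter, Finset.mem_erase]
    tauto
  have hIf : EI.card = 0 ∨ EI.card + t + a ≤ b := by
    rcases hIHI with h | h
    · left; simp [h]
    · right; exact h.2 habI
  constructor
  · omega
  · intro hnotmem
    have h5 : a ≠ l ∨ b ≠ r := by
      by_contra h
      push_neg at h
      exact hnotmem (h.1 ▸ h.2 ▸ he0)
    omega



noncomputable def arcOf {V : Type*} [Fintype V] (π : V ≃ Fin (Fintype.card V)) :
    Sym2 V → ℕ × ℕ :=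
  Sym2.lift ⟨fun u v => ((min (π u : ℕ) (π v : ℕ)), (max (π u : ℕ) (π v : ℕ))), fun u v => by
    simp [min_comm, max_comm]⟩

lemma edgeLen_eq_arc {V : Type*} [Fintype V] (π : V ≃ Fin (Fintype.card V)) (e : Sym2 V) :
    edgeLen π e = (arcOf π e).2 - (arcOf π e).1 := by
  induction e using Sym2.ind with
  | _ u v =>
    simp only [edgeLen, arcOf, Sym2.lift_mk]
    rcases le_total ((π u : ℕ)) ((π v : ℕ)) with h | h <;>
      simp [min_eq_left, min_eq_right, max_eq_left, max_eq_right, h] <;> omega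

lemma sum_Icc_choose (m : ℕ) : ∑ t ∈ Finset.Icc 1 m, (m + 1 - t) = (m + 1).choose 2 := by
  induction m with
  | zero => simp
  | succ m ih =>
    rw [Finset.sum_Icc_succ_top (by omega)]
    have h1 : ∑ t ∈ Finset.Icc 1 m, (m + 1 + 1 - t) = ∑ t ∈ Finset.Icc 1 m, ((m + 1 - t) + 1) :=
      Finset.sum_congr rfl fun t ht => by simp only [Finset.mem_Icc] at ht; omega
    rw [h1, Finset.sum_add_distrib, ih]
    simp only [Finset.sum_const, Nat.card_Icc, smul_eq_mul, mul_one]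
    have h2 : (m + 1 + 1).choose 2 = m + 1 + (m + 1).choose 2 := by
      simpa [Nat.choose_one_right] using Nat.choose_succ_succ (m + 1) 1
    omega

theorem planar_cost_le {V : Type*} [Fintype V] (G : SimpleGraph V) (hT : G.IsTree)
    (π : V ≃ Fin (Fintype.card V)) (hπ : Planar G π) :
    cost G π ≤ (Fintype.card V).choose 2 := by
  classical
  have hcost : cost G π = ∑ e ∈ G.edgeFinset, edgeLen π e := by
    rw [cost, ← G.coe_edgeFinset, finsum_mem_coe_finset]
  set A : Finset (ℕ × ℕ) := G.edgeFinset.image (arcOf π) with hA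
  have hinj : ∀ e1 ∈ G.edgeFinset, ∀ e2 ∈ G.edgeFinset, arcOf π e1 = arcOf π e2 → e1 = e2 := by
    intro e1 he1 e2 he2 heq
    induction e1 using Sym2.ind with
    | _ u1 v1 =>
    induction e2 using Sym2.ind with
    | _ u2 v2 =>
    simp only [arcOf, Sym2.lift_mk, Prod.mk.injEq] at heq
    have h1 : (π u1 : ℕ) = (π u2 : ℕ) ∧ (π v1 : ℕ) = (π v2 : ℕ) ∨
        (π u1 : ℕ) = (π v2 : ℕ) ∧ (π v1 : ℕ) = (π u2 : ℕ) := by omega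
    have hval : ∀ x y : V, (π x : ℕ) = (π y : ℕ) → x = y := by
      intro x y h
      exact π.injective (Fin.val_injective h)
    rcases h1 with ⟨h2, h3⟩ | ⟨h2, h3⟩
    · rw [hval _ _ h2, hval _ _ h3]
    · rw [hval _ _ h2, hval _ _ h3, Sym2.eq_swap]
  have hsumA : cost G π = ∑ p ∈ A, (p.2 - p.1) := by
    rw [hcost, hA, Finset.sum_image hinj]
    exact Finset.sum_congr rfl fun e _ => edgeLen_eq_arc π e
  have harcmem : ∀ p ∈ A, p.1 < p.2 ∧ p.2 ≤ Fintype.card V - 1 := by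
    intro p hp
    simp only [hA, Finset.mem_image] at hp
    obtain ⟨e, he, rfl⟩ := hp
    induction e using Sym2.ind with
    | _ u v =>
    have hadj : G.Adj u v := by
      rw [SimpleGraph.mem_edgeFinset, SimpleGraph.mem_edgeSet] at he
      exact he
    have h1 : (π u : ℕ) ≠ (π v : ℕ) := fun h => hadj.ne (π.injective (Fin.val_injective h))
    have h2 : (π u : ℕ) < Fintype.card V := (π u).isLt
    have h3 : (π v : ℕ) < Fintype.card V := (π v).isLt
    simp only [arcOf, Sym2.lift_mk]
    constructor
    · omega
    · simp only [max_le_iff]; omega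
  -- helper for planarity in ℕ coordinates
  have hplan : ∀ u1 v1 u2 v2 : V, G.Adj u1 v1 → G.Adj u2 v2 →
      (π u1 : ℕ) < (π v1 : ℕ) → (π u2 : ℕ) < (π v2 : ℕ) → (π u1 : ℕ) < (π u2 : ℕ) →
      ¬((π u2 : ℕ) < (π v1 : ℕ) ∧ (π v1 : ℕ) < (π v2 : ℕ)) := by
    intro u1 v1 u2 v2 ha1 ha2 h1 h2 h3 hc
    have := hπ ha1 ha2 (Fin.lt_def.2 h1) (Fin.lt_def.2 h2) (Fin.lt_def.2 h3)
    exact this ⟨Fin.lt_def.2 hc.1, Fin.lt_def.2 hc.2⟩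
  have hnc : ∀ p ∈ A, ∀ q ∈ A, ¬ (p.1 < q.1 ∧ q.1 < p.2 ∧ p.2 < q.2) := by
    intro p hp q hq
    simp only [hA, Finset.mem_image] at hp hq
    obtain ⟨e1, he1, rfl⟩ := hp
    obtain ⟨e2, he2, rfl⟩ := hq
    induction e1 using Sym2.ind with
    | _ u1 v1 =>
    induction e2 using Sym2.ind with
    | _ u2 v2 =>
    have had1 : G.Adj u1 v1 := by
      rw [SimpleGraph.mem_edgeFinset, SimpleGraph.mem_edgeSet] at he1; exact he1
    have had2 : G.Adj u2 v2 := by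
      rw [SimpleGraph.mem_edgeFinset, SimpleGraph.mem_edgeSet] at he2; exact he2
    have hne1 : (π u1 : ℕ) ≠ (π v1 : ℕ) := fun h => had1.ne (π.injective (Fin.val_injective h))
    have hne2 : (π u2 : ℕ) ≠ (π v2 : ℕ) := fun h => had2.ne (π.injective (Fin.val_injective h))
    simp only [arcOf, Sym2.lift_mk]
    rcases Nat.lt_or_ge (π u1 : ℕ) (π v1 : ℕ) with h1 | h1 <;>
      rcases Nat.lt_or_ge (π u2 : ℕ) (π v2 : ℕ) with h2 | h2
    · rw [min_eq_left h1.le, max_eq_right h1.le, min_eq_left h2.le, max_eq_right h2.le]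
      rintro ⟨c1, c2, c3⟩
      exact hplan u1 v1 u2 v2 had1 had2 h1 h2 c1 ⟨c2, c3⟩
    · have h2' : (π v2 : ℕ) < (π u2 : ℕ) := by omega
      rw [min_eq_left h1.le, max_eq_right h1.le, min_eq_right h2'.le, max_eq_left h2'.le]
      rintro ⟨c1, c2, c3⟩
      exact hplan u1 v1 v2 u2 had1 had2.symm h1 h2' c1 ⟨c2, c3⟩
    · have h1' : (π v1 : ℕ) < (π u1 : ℕ) := by omega
      rw [min_eq_right h1'.le, max_eq_left h1'.le, min_eq_left h2.le, max_eq_right h2.le]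
      rintro ⟨c1, c2, c3⟩
      exact hplan v1 u1 u2 v2 had1.symm had2 h1' h2 c1 ⟨c2, c3⟩
    · have h1' : (π v1 : ℕ) < (π u1 : ℕ) := by omega
      have h2' : (π v2 : ℕ) < (π u2 : ℕ) := by omega
      rw [min_eq_right h1'.le, max_eq_left h1'.le, min_eq_right h2'.le, max_eq_left h2'.le]
      rintro ⟨c1, c2, c3⟩
      exact hplan v1 u1 v2 u2 had1.symm had2.symm h1' h2' c1 ⟨c2, c3⟩
  have hthr : ∀ p ∈ A, p.2 - p.1 =
      ∑ t ∈ Finset.Icc 1 (Fintype.card V - 1), (if t ≤ p.2 - p.1 then 1 else 0) := by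
    intro p hp
    obtain ⟨h1, h2⟩ := harcmem p hp
    rw [← Finset.card_filter]
    have : Finset.filter (fun t => t ≤ p.2 - p.1) (Finset.Icc 1 (Fintype.card V - 1)) =
        Finset.Icc 1 (p.2 - p.1) := by
      ext t
      simp only [Finset.mem_filter, Finset.mem_Icc]
      omega
    rw [this, Nat.card_Icc]
    omega
  have hswap : cost G π = ∑ t ∈ Finset.Icc 1 (Fintype.card V - 1),
      (A.filter (fun p => t ≤ p.2 - p.1)).card := by
    rw [hsumA, Finset.sum_congr rfl hthr, Finset.sum_comm]
    exact Finset.sum_congr rfl fun t _ => (Finset.card_filter _ _).symm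
  have hcardA : A.card = Fintype.card V - 1 := by
    rw [hA, Finset.card_image_of_injOn hinj]
    have := hT.card_edgeFinset
    omega
  have hbnd : ∀ t ∈ Finset.Icc 1 (Fintype.card V - 1),
      (A.filter (fun p => t ≤ p.2 - p.1)).card ≤ Fintype.card V - t := by
    intro t ht
    simp only [Finset.mem_Icc] at ht
    rcases eq_or_lt_of_le ht.1 with h1 | h1
    · calc (A.filter (fun p => t ≤ p.2 - p.1)).card ≤ A.card :=
          Finset.card_le_card (Finset.filter_subset _ _)
      _ = Fintype.card V - 1 := hcardA
      _ ≤ Fintype.card V - t := by omega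
    · have h2 : 2 ≤ t := h1
      have := lemmaA t h2 (A.filter (fun p => t ≤ p.2 - p.1)) 0 (Fintype.card V - 1)
        (fun p hp => by
          have ha := harcmem p (Finset.mem_of_mem_filter _ hp)
          have hb := (Finset.mem_filter.1 hp).2
          omega)
        (fun p hp q hq => hnc p (Finset.mem_of_mem_filter _ hp) q (Finset.mem_of_mem_filter _ hq))
      rcases this with h | h
      · simp [h]
      · omega
  calc cost G π = ∑ t ∈ Finset.Icc 1 (Fintype.card V - 1),
        (A.filter (fun p => t ≤ p.2 - p.1)).card := hswap
    _ ≤ ∑ t ∈ Finset.Icc 1 (Fintype.card V - 1), (Fintype.card V - t) := Finset.sum_le_sum hbnd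
    _ = (Fintype.card V).choose 2 := by
        rcases Nat.eq_zero_or_pos (Fintype.card V) with h | h
        · simp [h]
        · have := sum_Icc_choose (Fintype.card V - 1)
          have he : Fintype.card V - 1 + 1 = Fintype.card V := by omega
          rw [he] at this
          rw [← this]


namespace RosaAux

variable {V : Type*} [DecidableEq V]

def rosa : List (V × List V) → List V
  | [] => []
  | (b, L) :: tl => b :: ((rosa tl).reverse ++ L)

def cverts : List (V × List V) → List V
  | [] => []
  | (b, L) :: tl => b :: (L ++ cverts tl)

def cedges : List (V × List V) → List (V × V)
  | [] => []
  | [(b, L)] => L.map (fun x => (b, x))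
  | (b, L) :: (b', L') :: tl => (b, b') :: (L.map (fun x => (b, x)) ++ cedges ((b', L') :: tl))

lemma rosa_perm (cs : List (V × List V)) : (rosa cs).Perm (cverts cs) := by
  induction cs with
  | nil => exact List.Perm.refl _
  | cons hd tl ih =>
    obtain ⟨b, L⟩ := hd
    simp only [rosa, cverts]
    refine List.Perm.cons b ?_
    exact (((rosa tl).reverse_perm).append_right L).trans
      ((ih.append_right L).trans (List.perm_append_comm))

lemma rosa_length (cs : List (V × List V)) : (rosa cs).length = (cverts cs).length :=
  (rosa_perm cs).length_eq

lemma cedges_mem {cs : List (V × List V)} {p : V × V} (hp : p ∈ cedges cs) :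
    p.1 ∈ cverts cs ∧ p.2 ∈ cverts cs := by
  induction cs with
  | nil => simp [cedges] at hp
  | cons hd tl ih =>
    obtain ⟨b, L⟩ := hd
    match tl, hp with
    | [], hp =>
      simp only [cedges, List.mem_map] at hp
      obtain ⟨x, hx, rfl⟩ := hp
      simp [cverts, hx]
    | (b', L') :: tl', hp =>
      simp only [cedges, List.mem_cons, List.mem_append, List.mem_map] at hp
      rcases hp with rfl | ⟨x, hx, rfl⟩ | hp
      · constructor
        · simp [cverts]
        · simp only [cverts, List.mem_cons, List.mem_append]
          right; right
          simp [cverts]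
      · simp [cverts, hx]
      · have := ih hp
        simp only [cverts, List.mem_cons, List.mem_append] at this ⊢
        tauto

lemma cedges_length {cs : List (V × List V)} (h : cs ≠ []) :
    (cedges cs).length + 1 = (cverts cs).length := by
  induction cs with
  | nil => simp at h
  | cons hd tl ih =>
    obtain ⟨b, L⟩ := hd
    match tl with
    | [] => simp [cedges, cverts]
    | (b', L') :: tl' =>
      have := ih (by simp)
      simp only [cedges, cverts, List.length_cons, List.length_append, List.length_map] at this ⊢
      omega

lemma indexOf_reverse {l : List V} (h : l.Nodup) {v : V} (hv : v ∈ l) :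
    l.reverse.idxOf v = l.length - 1 - l.idxOf v := by
  have h1 : l.idxOf v < l.length := List.idxOf_lt_length_iff.2 hv
  have h2 : l.length - 1 - l.idxOf v < l.reverse.length := by
    rw [List.length_reverse]; omega
  have h3 : l.reverse[l.length - 1 - l.idxOf v] = v := by
    rw [List.getElem_reverse]
    have h4 : l.length - 1 - (l.length - 1 - l.idxOf v) = l.idxOf v := by omega
    simp only [h4]
    exact List.getElem_idxOf h1
  conv_lhs => rw [← h3]
  exact List.Nodup.idxOf_getElem (List.nodup_reverse.2 h) _ h2

section Positions

variable {b : V} {L : List V} {tl : List (V × List V)}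

/-- abbreviations for the step case -/
lemma step_nodup (hnd : (cverts ((b, L) :: tl)).Nodup) :
    b ∉ L ∧ b ∉ cverts tl ∧ L.Nodup ∧ (cverts tl).Nodup ∧ ∀ x ∈ L, x ∉ cverts tl := by
  simp only [cverts] at hnd
  obtain ⟨hb, hrest⟩ := List.nodup_cons.1 hnd
  obtain ⟨hL, htl, hdisj⟩ := List.nodup_append.1 hrest
  exact ⟨fun h => hb (List.mem_append.2 (Or.inl h)), fun h => hb (List.mem_append.2 (Or.inr h)),
    hL, htl, fun x hx hx' => hdisj x hx x hx' rfl⟩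

lemma pos_head (hnd : (cverts ((b, L) :: tl)).Nodup) :
    (rosa ((b, L) :: tl)).idxOf b = 0 := by
  simp [rosa, List.idxOf_cons_self]

lemma pos_old (hnd : (cverts ((b, L) :: tl)).Nodup) {v : V} (hv : v ∈ cverts tl) :
    (rosa ((b, L) :: tl)).idxOf v = (rosa tl).length - (rosa tl).idxOf v ∧
    (rosa tl).idxOf v < (rosa tl).length := by
  obtain ⟨h1, h2, h3, h4, h5⟩ := step_nodup hnd
  have hvr : v ∈ rosa tl := ((rosa_perm tl).mem_iff).2 hv
  have hlt : (rosa tl).idxOf v < (rosa tl).length := List.idxOf_lt_length_iff.2 hvr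
  have hvb : v ≠ b := fun h => h2 (h ▸ hv)
  have hnodtl : (rosa tl).Nodup := ((rosa_perm tl).nodup_iff).2 h4
  constructor
  · simp only [rosa]
    rw [List.idxOf_cons_ne _ (Ne.symm hvb),
      List.idxOf_append_of_mem (by rwa [List.mem_reverse]),
      indexOf_reverse hnodtl hvr]
    omega
  · exact hlt

lemma pos_leaf (hnd : (cverts ((b, L) :: tl)).Nodup) {x : V} (hx : x ∈ L) :
    (rosa ((b, L) :: tl)).idxOf x = (rosa tl).length + 1 + L.idxOf x := by
  obtain ⟨h1, h2, h3, h4, h5⟩ := step_nodup hnd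
  have hxb : x ≠ b := fun h => h1 (h ▸ hx)
  have hxr : x ∉ (rosa tl).reverse := by
    rw [List.mem_reverse]
    intro h
    exact h5 x hx (((rosa_perm tl).mem_iff).1 h)
  simp only [rosa]
  rw [List.idxOf_cons_ne _ (Ne.symm hxb), List.idxOf_append_of_notMem hxr,
    List.length_reverse]
  omega

end Positions



def rdist (l : List V) (p : V × V) : ℕ :=
  max (l.idxOf p.1) (l.idxOf p.2) - min (l.idxOf p.1) (l.idxOf p.2)

lemma choose_two_succ (x : ℕ) : (x + 1).choose 2 = x + x.choose 2 := by
  simpa [Nat.choose_one_right] using Nat.choose_succ_succ x 1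

lemma choose_two_add (a b : ℕ) : (a + b).choose 2 = a.choose 2 + b.choose 2 + a * b := by
  induction b with
  | zero => simp
  | succ b ih =>
    have h1 := choose_two_succ (a + b)
    have h2 := choose_two_succ b
    have h3 : a + (b + 1) = (a + b) + 1 := by omega
    rw [h3, h1, ih, h2]
    ring

lemma sum_map_add (L : List V) (c : ℕ) (f : V → ℕ) :
    (L.map (fun x => c + f x)).sum = c * L.length + (L.map f).sum := by
  induction L with
  | nil => simp
  | cons a l ih => simp [ih]; ring

lemma sum_range_choose_two (k : ℕ) : (List.range k).sum = k.choose 2 := by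
  induction k with
  | zero => simp
  | succ k ih => rw [List.range_succ, List.sum_append, ih, choose_two_succ]; simp; omega

lemma sum_indexOf {L : List V} (h : L.Nodup) :
    (L.map (fun x => L.idxOf x)).sum = L.length.choose 2 := by
  have : L.map (fun x => L.idxOf x) = List.range L.length := by
    apply List.ext_getElem
    · simp
    · intro i h1 h2
      simp only [List.getElem_map, List.getElem_range]
      exact List.Nodup.idxOf_getElem h i (by simpa using h1)
  rw [this, sum_range_choose_two]

lemma rosa_cost : ∀ (cs : List (V × List V)), (cverts cs).Nodup →
    ((cedges cs).map (rdist (rosa cs))).sum = ((rosa cs).length).choose 2 := by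
  intro cs
  induction cs with
  | nil => intro _; simp [cedges, rosa]
  | cons hd tl ih =>
    intro hnd
    obtain ⟨b, L⟩ := hd
    rcases tl with _ | ⟨⟨b', L'⟩, tl'⟩
    -- singleton case
    · obtain ⟨h1, h2, h3, h4, h5⟩ := step_nodup hnd
      have hb0 : (rosa [(b, L)]).idxOf b = 0 := pos_head hnd
      have hleaf : ∀ x ∈ L, rdist (rosa [(b, L)]) (b, x) =
          ((rosa ([] : List (V × List V))).length + 1) + L.idxOf x := by
        intro x hx
        have := pos_leaf hnd hx
        simp only [rdist, hb0, this]
        omega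
      have hleafsum : (L.map (fun x => rdist (rosa [(b, L)]) (b, x))).sum =
          ((rosa ([] : List (V × List V))).length + 1) * L.length + L.length.choose 2 := by
        rw [List.map_congr_left (fun x hx => hleaf x hx), sum_map_add, sum_indexOf h3]
      have hmap : (cedges [(b, L)]).map (rdist (rosa [(b, L)])) =
          L.map (fun x => rdist (rosa [(b, L)]) (b, x)) := by
        simp only [cedges, List.map_map]
        rfl
      rw [hmap, hleafsum]
      have e1 : (rosa ([] : List (V × List V))).length = 0 := rfl
      have e2 : (rosa [(b, L)]).length = L.length + 1 := by
        simp [rosa]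
      rw [e1, e2, choose_two_succ]
      omega
    -- step case
    · obtain ⟨h1, h2, h3, h4, h5⟩ := step_nodup hnd
      have hb0 : (rosa ((b, L) :: (b', L') :: tl')).idxOf b = 0 := pos_head hnd
      have hleaf : ∀ x ∈ L, rdist (rosa ((b, L) :: (b', L') :: tl')) (b, x) =
          ((rosa ((b', L') :: tl')).length + 1) + L.idxOf x := by
        intro x hx
        have := pos_leaf hnd hx
        simp only [rdist, hb0, this]
        omega
      have hleafsum : (L.map (fun x => rdist (rosa ((b, L) :: (b', L') :: tl')) (b, x))).sum =
          ((rosa ((b', L') :: tl')).length + 1) * L.length + L.length.choose 2 := by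
        rw [List.map_congr_left (fun x hx => hleaf x hx), sum_map_add, sum_indexOf h3]
      have hb'mem : b' ∈ cverts ((b', L') :: tl') := by simp [cverts]
      have hb'r : (rosa ((b', L') :: tl')).idxOf b' = 0 := by
        simp [rosa, List.idxOf_cons_self]
      obtain ⟨hb'pos, _⟩ := pos_old hnd hb'mem
      have hdistbb' : rdist (rosa ((b, L) :: (b', L') :: tl')) (b, b') =
          (rosa ((b', L') :: tl')).length := by
        simp only [rdist, hb0, hb'pos, hb'r]
        omega
      have hold : ∀ p ∈ cedges ((b', L') :: tl'),
          rdist (rosa ((b, L) :: (b', L') :: tl')) p = rdist (rosa ((b', L') :: tl')) p := by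
        intro p hp
        obtain ⟨hp1, hp2⟩ := cedges_mem hp
        obtain ⟨e1, f1⟩ := pos_old hnd hp1
        obtain ⟨e2, f2⟩ := pos_old hnd hp2
        simp only [rdist, e1, e2]
        omega
      have hmap : (cedges ((b, L) :: (b', L') :: tl')).map (rdist (rosa ((b, L) :: (b', L') :: tl')))
          = rdist (rosa ((b, L) :: (b', L') :: tl')) (b, b')
            :: ((L.map (fun x => rdist (rosa ((b, L) :: (b', L') :: tl')) (b, x)))
              ++ (cedges ((b', L') :: tl')).map (rdist (rosa ((b, L) :: (b', L') :: tl')))) := by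
        simp only [cedges, List.map_cons, List.map_append, List.map_map]
        rfl
      rw [hmap]
      simp only [List.sum_cons, List.sum_append]
      rw [hdistbb', hleafsum, List.map_congr_left hold, ih h4]
      have hlen : (rosa ((b, L) :: (b', L') :: tl')).length =
          ((rosa ((b', L') :: tl')).length + 1) + L.length := by
        simp only [rosa, List.length_cons, List.length_append, List.length_reverse]
        omega
      rw [hlen, choose_two_add, choose_two_succ]
      omega

/-- classification of edges in the step case -/
lemma cedges_cases {b b' : V} {L L' : List V} {tl' : List (V × List V)} {p : V × V}
    (hp : p ∈ cedges ((b, L) :: (b', L') :: tl')) :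
    p = (b, b') ∨ (∃ x ∈ L, p = (b, x)) ∨ p ∈ cedges ((b', L') :: tl') := by
  simp only [cedges, List.mem_cons, List.mem_append, List.mem_map] at hp
  rcases hp with h | h | h
  · left; exact h
  · right; left; obtain ⟨x, hx, rfl⟩ := h; exact ⟨x, hx, rfl⟩
  · right; right; exact h

lemma rosa_nc : ∀ (cs : List (V × List V)), (cverts cs).Nodup →
    ∀ p ∈ cedges cs, ∀ q ∈ cedges cs,
    ¬ (min ((rosa cs).idxOf p.1) ((rosa cs).idxOf p.2) <
         min ((rosa cs).idxOf q.1) ((rosa cs).idxOf q.2) ∧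
       min ((rosa cs).idxOf q.1) ((rosa cs).idxOf q.2) <
         max ((rosa cs).idxOf p.1) ((rosa cs).idxOf p.2) ∧
       max ((rosa cs).idxOf p.1) ((rosa cs).idxOf p.2) <
         max ((rosa cs).idxOf q.1) ((rosa cs).idxOf q.2)) := by
  intro cs
  induction cs with
  | nil => intro _ p hp; simp [cedges] at hp
  | cons hd tl ih =>
    intro hnd p hp q hq
    obtain ⟨b, L⟩ := hd
    rcases tl with _ | ⟨⟨b', L'⟩, tl'⟩
    -- singleton : all edges share b as first coordinate with index 0
    · have hb0 : (rosa [(b, L)]).idxOf b = 0 := pos_head hnd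
      simp only [cedges, List.mem_map] at hp hq
      obtain ⟨x, hx, rfl⟩ := hp
      obtain ⟨y, hy, rfl⟩ := hq
      simp only [hb0]
      omega
    -- step case
    · have hb0 : (rosa ((b, L) :: (b', L') :: tl')).idxOf b = 0 := pos_head hnd
      have hb'mem : b' ∈ cverts ((b', L') :: tl') := by simp [cverts]
      have hb'r : (rosa ((b', L') :: tl')).idxOf b' = 0 := by
        simp [rosa, List.idxOf_cons_self]
      obtain ⟨hb'pos, _⟩ := pos_old hnd hb'mem
      obtain ⟨h1, h2, h3, h4, h5⟩ := step_nodup hnd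
      set m := (rosa ((b', L') :: tl')).length with hm
      have hm1 : 1 ≤ m := by simp [hm, rosa]
      -- uniform facts for "new" edges: first coord = b (idx 0), second coord has idx ≥ m
      have hnew : ∀ {e : V × V}, e ∈ cedges ((b, L) :: (b', L') :: tl') →
          (e = (b, b') ∨ (∃ x ∈ L, e = (b, x))) →
          (rosa ((b, L) :: (b', L') :: tl')).idxOf e.1 = 0 ∧
          m ≤ (rosa ((b, L) :: (b', L') :: tl')).idxOf e.2 := by
        intro e he hcase
        rcases hcase with rfl | ⟨x, hx, rfl⟩
        · refine ⟨hb0, ?_⟩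
          rw [hb'pos, hb'r]
          omega
        · refine ⟨hb0, ?_⟩
          rw [pos_leaf hnd hx]
          omega
      -- uniform facts for "old" edges
      have hold : ∀ {e : V × V}, e ∈ cedges ((b', L') :: tl') →
          (rosa ((b, L) :: (b', L') :: tl')).idxOf e.1 =
            m - (rosa ((b', L') :: tl')).idxOf e.1 ∧
          (rosa ((b', L') :: tl')).idxOf e.1 < m ∧
          (rosa ((b, L) :: (b', L') :: tl')).idxOf e.2 =
            m - (rosa ((b', L') :: tl')).idxOf e.2 ∧
          (rosa ((b', L') :: tl')).idxOf e.2 < m := by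
        intro e he
        obtain ⟨he1, he2⟩ := cedges_mem he
        obtain ⟨f1, g1⟩ := pos_old hnd he1
        obtain ⟨f2, g2⟩ := pos_old hnd he2
        exact ⟨f1, g1, f2, g2⟩
      rcases cedges_cases hp with hpc | hpc | hpc <;> rcases cedges_cases hq with hqc | hqc | hqc
      · obtain ⟨e1, e2⟩ := hnew hp (Or.inl hpc); obtain ⟨e3, e4⟩ := hnew hq (Or.inl hqc)
        omega
      · obtain ⟨e1, e2⟩ := hnew hp (Or.inl hpc); obtain ⟨e3, e4⟩ := hnew hq (Or.inr hqc)
        omega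
      · obtain ⟨e1, e2⟩ := hnew hp (Or.inl hpc); obtain ⟨e3, e4, e5, e6⟩ := hold hqc
        omega
      · obtain ⟨e1, e2⟩ := hnew hp (Or.inr hpc); obtain ⟨e3, e4⟩ := hnew hq (Or.inl hqc)
        omega
      · obtain ⟨e1, e2⟩ := hnew hp (Or.inr hpc); obtain ⟨e3, e4⟩ := hnew hq (Or.inr hqc)
        omega
      · obtain ⟨e1, e2⟩ := hnew hp (Or.inr hpc); obtain ⟨e3, e4, e5, e6⟩ := hold hqc
        omega
      · obtain ⟨e1, e2, e3, e4⟩ := hold hpc; obtain ⟨e5, e6⟩ := hnew hq (Or.inl hqc)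
        omega
      · obtain ⟨e1, e2, e3, e4⟩ := hold hpc; obtain ⟨e5, e6⟩ := hnew hq (Or.inr hqc)
        omega
      · obtain ⟨e1, e2, e3, e4⟩ := hold hpc; obtain ⟨e5, e6, e7, e8⟩ := hold hqc
        have := ih h4 q hqc p hpc
        omega

lemma cedges_sym2_nodup : ∀ (cs : List (V × List V)), (cverts cs).Nodup →
    ((cedges cs).map (fun p => s(p.1, p.2))).Nodup := by
  intro cs
  induction cs with
  | nil => intro _; simp [cedges]
  | cons hd tl ih =>
    intro hnd
    obtain ⟨b, L⟩ := hd
    obtain ⟨h1, h2, h3, h4, h5⟩ := step_nodup hnd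
    have hleafinj : ∀ x ∈ L, ∀ y ∈ L, s(b, x) = s(b, y) → x = y := by
      intro x hx y hy hxy
      rw [Sym2.eq_iff] at hxy
      rcases hxy with ⟨-, h⟩ | ⟨hbx, hby⟩
      · exact h
      · exact absurd hbx.symm (fun h => h1 (h ▸ hy))
    have hleafnodup : ((L.map (fun x => (b, x))).map (fun p => s(p.1, p.2))).Nodup := by
      rw [List.map_map]
      exact h3.map_on (fun x hx y hy h => hleafinj x hx y hy h)
    rcases tl with _ | ⟨⟨b', L'⟩, tl'⟩
    · simpa [cedges, List.map_map] using hleafnodup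
    · have hold := ih h4
      have hbnotold : ∀ e ∈ cedges ((b', L') :: tl'), ∀ c : V, s(b, c) ≠ s(e.1, e.2) := by
        intro e he c hc
        obtain ⟨he1, he2⟩ := cedges_mem he
        rw [Sym2.eq_iff] at hc
        rcases hc with ⟨hb1, -⟩ | ⟨hb2, -⟩
        · exact h2 (hb1 ▸ he1)
        · exact h2 (hb2 ▸ he2)
      simp only [cedges, List.map_cons, List.map_append, List.nodup_cons, List.mem_append,
        List.mem_map, List.nodup_append]
      refine ⟨?_, ?_, ?_, ?_⟩
      · rintro (⟨p, ⟨x, hx, rfl⟩, hps⟩ | ⟨p, hp, hps⟩)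
        · simp only at hps
          rw [Sym2.eq_iff] at hps
          have hb'cv : b' ∈ cverts ((b', L') :: tl') := by simp [cverts]
          rcases hps with ⟨-, hxb'⟩ | ⟨hbb', hxb⟩
          · refine h5 x hx ?_
            rw [hxb']
            exact hb'cv
          · exact h2 (hbb' ▸ hb'cv)
        · exact hbnotold p hp b' hps.symm
      · exact hleafnodup
      · exact hold
      · -- disjointness of leaf images and old images
        intro a ha c ha'
        obtain ⟨p, ⟨x, hx, rfl⟩, rfl⟩ := ha
        obtain ⟨e, he, rfl⟩ := ha'
        exact hbnotold e he x

lemma cverts_map (g : V → List V) : ∀ (l : List V),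
    cverts (l.map (fun s => (s, g s))) = l.flatMap (fun s => s :: g s) := by
  intro l
  induction l with
  | nil => rfl
  | cons s l ih => simp [cverts, ih]

lemma cedges_rel {R : V → V → Prop} (g : V → List V) :
    ∀ (l : List V), List.Chain' R l → (∀ s ∈ l, ∀ x ∈ g s, R s x) →
    ∀ e ∈ cedges (l.map (fun s => (s, g s))), R e.1 e.2 := by
  intro l
  induction l with
  | nil => intro _ _ e he; simp [cedges] at he
  | cons s l ih =>
    intro hch hg e he
    rcases l with _ | ⟨s', l'⟩
    · simp only [List.map_cons, List.map_nil, cedges, List.mem_map] at he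
      obtain ⟨x, hx, rfl⟩ := he
      exact hg s (by simp) x hx
    · simp only [List.map_cons, cedges, List.mem_cons, List.mem_append, List.mem_map] at he
      rcases he with rfl | ⟨x, hx, rfl⟩ | he
      · exact hch.rel_head
      · exact hg s (by simp) x hx
      · refine ih hch.tail (fun a ha x hx => hg a (by simp [ha]) x hx) e ?_
        simpa [cedges] using he

end RosaAux


open RosaAux in
theorem caterpillar_exists (n : ℕ) (hn : 0 < n) (G : SimpleGraph (Fin n)) (hG : G.IsTree)
    (hcat : ∃ (a b : Fin n) (p : G.Walk a b), p.IsPath ∧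
      ∀ v : Fin n, v ∈ p.support ∨ ∃ u ∈ p.support, G.Adj u v) :
    ∃ π : Fin n ≃ Fin (Fintype.card (Fin n)), Planar G π ∧ cost G π = n.choose 2 := by
  classical
  obtain ⟨a, b, p, hp, hdom⟩ := hcat
  have hdom' : ∀ v : Fin n, v ∉ p.support → ∃ u, u ∈ p.support ∧ G.Adj u v := by
    intro v hv
    rcases hdom v with h | ⟨u, hu, hadj⟩
    · exact absurd h hv
    · exact ⟨u, hu, hadj⟩
  choose f hf1 hf2 using hdom'
  set lv : Fin n → List (Fin n) :=
    fun s => (Finset.univ.filter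
      (fun v : Fin n => ∃ h : v ∉ p.support, f v h = s)).toList with hlv
  set cs := p.support.map (fun s => (s, lv s)) with hcs
  have hlvmem : ∀ s x, x ∈ lv s ↔ ∃ h : x ∉ p.support, f x h = s := by
    intro s x
    simp [hlv, Finset.mem_toList]
  have hcv : cverts cs = p.support.flatMap (fun s => s :: lv s) := cverts_map lv p.support
  have hsupnd : p.support.Nodup := hp.support_nodup
  -- nodup of the vertex list
  have hnd : (cverts cs).Nodup := by
    rw [hcv, List.nodup_flatMap]
    constructor
    · intro s hs
      rw [List.nodup_cons]
      refine ⟨fun hsl => ?_, Finset.nodup_toList _⟩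
      obtain ⟨h, -⟩ := (hlvmem s s).1 hsl
      exact h hs
    · refine List.Pairwise.imp_of_mem ?_ hsupnd
      intro s s' hs hs' hne x hx hx'
      rcases List.mem_cons.1 hx with rfl | hx
      · rcases List.mem_cons.1 hx' with h | h
        · exact hne h
        · obtain ⟨hnot, -⟩ := (hlvmem s' x).1 h
          exact hnot hs
      · obtain ⟨hnot, hfx⟩ := (hlvmem s x).1 hx
        rcases List.mem_cons.1 hx' with rfl | h
        · exact hnot hs'
        · obtain ⟨hnot2, hfx2⟩ := (hlvmem s' x).1 h
          apply hne
          rw [← hfx, ← hfx2]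
  have hcov : ∀ v : Fin n, v ∈ cverts cs := by
    intro v
    rw [hcv, List.mem_flatMap]
    by_cases hv : v ∈ p.support
    · exact ⟨v, hv, by simp⟩
    · refine ⟨f v hv, hf1 v hv, ?_⟩
      rw [List.mem_cons]
      right
      rw [hlvmem]
      exact ⟨hv, rfl⟩
  have hadj : ∀ e ∈ cedges cs, G.Adj e.1 e.2 := by
    rw [hcs]
    refine cedges_rel lv p.support p.isChain_adj_support ?_
    intro s hs x hx
    obtain ⟨h, hfx⟩ := (hlvmem s x).1 hx
    rw [← hfx]
    exact hf2 x h
  have hlenv : (cverts cs).length = n := by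
    have h1 : (cverts cs).toFinset = Finset.univ :=
      Finset.eq_univ_iff_forall.2 (fun v => List.mem_toFinset.2 (hcov v))
    have h2 := List.toFinset_card_of_nodup hnd
    rw [h1] at h2
    simp only [Finset.card_univ, Fintype.card_fin] at h2
    omega
  have hcsne : cs ≠ [] := by
    rw [hcs]
    simp [p.support_ne_nil]
  have hec : (cedges cs).length + 1 = n := by
    rw [cedges_length hcsne, hlenv]
  set s2 := (cedges cs).map (fun q : Fin n × Fin n => s(q.1, q.2)) with hs2
  have hs2nd : s2.Nodup := cedges_sym2_nodup cs hnd
  have hsub : s2.toFinset ⊆ G.edgeFinset := by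
    intro e he
    rw [List.mem_toFinset] at he
    obtain ⟨q, hq, rfl⟩ := List.mem_map.1 he
    rw [SimpleGraph.mem_edgeFinset, SimpleGraph.mem_edgeSet]
    exact hadj q hq
  have hcard2 : s2.toFinset.card = n - 1 := by
    rw [List.toFinset_card_of_nodup hs2nd, hs2, List.length_map]
    omega
  have hEeq : s2.toFinset = G.edgeFinset := by
    refine Finset.eq_of_subset_of_card_le hsub ?_
    have h1 := hG.card_edgeFinset
    rw [Fintype.card_fin] at h1
    omega
  -- the arrangement
  set l := rosa cs with hl
  have hlnd : l.Nodup := ((rosa_perm cs).nodup_iff).2 hnd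
  have hllen : l.length = n := by rw [hl, rosa_length, hlenv]
  have hmem : ∀ v : Fin n, v ∈ l := fun v => ((rosa_perm cs).mem_iff).2 (hcov v)
  have hidxlt : ∀ v : Fin n, l.idxOf v < Fintype.card (Fin n) := by
    intro v
    rw [Fintype.card_fin]
    have := List.idxOf_lt_length_iff.2 (hmem v)
    omega
  set pos : Fin n → Fin (Fintype.card (Fin n)) := fun v => ⟨l.idxOf v, hidxlt v⟩ with hposd
  have hposinj : Function.Injective pos := by
    intro u v h
    have h2 : l.idxOf u = l.idxOf v := congrArg Fin.val h
    exact (List.idxOf_inj (hmem u)).1 h2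
  have hposbij : Function.Bijective pos :=
    (Fintype.bijective_iff_injective_and_card pos).2 ⟨hposinj, by simp⟩
  refine ⟨Equiv.ofBijective pos hposbij, ?_, ?_⟩
  · -- planarity
    intro s t u v hst huv h1 h2 h3
    rintro ⟨c1, c2⟩
    have hval : ∀ x : Fin n, ((Equiv.ofBijective pos hposbij) x : ℕ) = l.idxOf x :=
      fun x => rfl
    simp only [Fin.lt_def, hval] at h1 h2 h3 c1 c2
    have hmem1 : s(s, t) ∈ s2.toFinset := by
      rw [hEeq, SimpleGraph.mem_edgeFinset, SimpleGraph.mem_edgeSet]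
      exact hst
    have hmem2 : s(u, v) ∈ s2.toFinset := by
      rw [hEeq, SimpleGraph.mem_edgeFinset, SimpleGraph.mem_edgeSet]
      exact huv
    obtain ⟨q, hq, hqs⟩ := List.mem_map.1 (List.mem_toFinset.1 hmem1)
    obtain ⟨q', hq', hq's⟩ := List.mem_map.1 (List.mem_toFinset.1 hmem2)
    obtain ⟨q1, q2⟩ := q
    obtain ⟨q1', q2'⟩ := q'
    have hnc := rosa_nc cs hnd (q1, q2) hq (q1', q2') hq'
    rw [← hl] at hnc
    simp only at hqs hq's
    rw [Sym2.eq_iff] at hqs hq's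
    rcases hqs with ⟨e1, e2⟩ | ⟨e1, e2⟩ <;> rcases hq's with ⟨e3, e4⟩ | ⟨e3, e4⟩ <;>
      subst e1 <;> subst e2 <;> subst e3 <;> subst e4 <;>
      simp only at hnc <;> omega
  · -- cost
    have hval : ∀ x : Fin n, ((Equiv.ofBijective pos hposbij) x : ℕ) = l.idxOf x :=
      fun x => rfl
    have hel : ∀ q : Fin n × Fin n,
        edgeLen (Equiv.ofBijective pos hposbij) s(q.1, q.2) = rdist l q := by
      intro q
      simp only [edgeLen, Sym2.lift_mk, rdist]
      have e1 : ((Equiv.ofBijective pos hposbij) q.1 : ℤ) = (l.idxOf q.1 : ℤ) := by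
        rw [← hval q.1]
      have e2 : ((Equiv.ofBijective pos hposbij) q.2 : ℤ) = (l.idxOf q.2 : ℤ) := by
        rw [← hval q.2]
      rw [e1, e2]
      omega
    rw [cost, ← G.coe_edgeFinset, finsum_mem_coe_finset, ← hEeq,
      List.sum_toFinset _ hs2nd, hs2, List.map_map]
    have hmc : ((cedges cs).map ((edgeLen (Equiv.ofBijective pos hposbij)) ∘
        (fun q : Fin n × Fin n => s(q.1, q.2)))) = (cedges cs).map (rdist l) :=
      List.map_congr_left (fun q _ => hel q)
    rw [hmc, hl, rosa_cost cs hnd, rosa_length, hlenv]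


/-- Every caterpillar tree (a tree having a path such that every vertex is on
the path or adjacent to it) on `n` vertices admits a planar arrangement of cost
`n choose 2`; hence `D_max^pl(T) = n choose 2` and caterpillars attain the
maximum of `D_max^pl` over all `n`-vertex trees. -/
theorem caterpillar_maxPlanar (n : ℕ) (hn : 0 < n)
    (G : SimpleGraph (Fin n)) (hG : G.IsTree)
    (hcat : ∃ (a b : Fin n) (p : G.Walk a b), p.IsPath ∧
      ∀ v : Fin n, v ∈ p.support ∨ ∃ u ∈ p.support, G.Adj u v) :
    (∃ π : Fin n ≃ Fin (Fintype.card (Fin n)),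
        Planar G π ∧ cost G π = n.choose 2) ∧
    maxPlanar G = n.choose 2 ∧
    ∀ G' : SimpleGraph (Fin n), G'.IsTree → maxPlanar G' ≤ maxPlanar G := by
  obtain ⟨π, hpl, hc⟩ := caterpillar_exists n hn G hG hcat
  have hub : ∀ (G' : SimpleGraph (Fin n)),
      G'.IsTree → ∀ c ∈ {c | ∃ π' : Fin n ≃ Fin (Fintype.card (Fin n)),
        Planar G' π' ∧ cost G' π' = c}, c ≤ n.choose 2 := by
    rintro G' hG' c ⟨π', h1, h2⟩
    rw [← h2]
    have := planar_cost_le G' hG' π' h1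
    rwa [Fintype.card_fin] at this
  have hmax : maxPlanar G = n.choose 2 := by
    apply le_antisymm
    · exact csSup_le ⟨n.choose 2, π, hpl, hc⟩ (hub G hG)
    · exact le_csSup ⟨n.choose 2, fun c hcmem => hub G hG c hcmem⟩ ⟨π, hpl, hc⟩
  refine ⟨⟨π, hpl, hc⟩, hmax, ?_⟩
  intro G' hG'
  rw [hmax]
  rcases Set.eq_empty_or_nonempty {c | ∃ π' : Fin n ≃ Fin (Fintype.card (Fin n)),
      Planar G' π' ∧ cost G' π' = c} with he | hne
  · unfold maxPlanar
    rw [he, csSup_empty]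
    exact bot_le
  · exact csSup_le hne (hub G' hG')
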